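/- Let G be a group, n ≥ 0, let K be a G-set, let X be a set with commuting actions of G and of O(n), and let ρ : G → O(n) be a group homomorphism. Equip O(n) × K with the O(n)-action σ·(τ, k) := (στ, k) and the G-action g·(τ, k) := (τ ρ(g)⁻¹, g·k). Then: (i) these two actions on O(n) × K commute; (ii) there is a bijection between the set of maps α : O(n) × K → X that are simultaneously O(n)-equivariant and G-equivariant, and the set of maps β : K → X satisfying β(g·k) = ρ(g)·(g·β(k)) for all g ∈ G, k ∈ K; the bijection sends α to β(k) = α(1, k), with inverse sending β to α(τ, k) = τ·β(k). -/
import Mathlib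


/-- Let `K` be a `G`-set, `X` a set with commuting actions of `G` and
`O(n)`, and `ρ : G → O(n)`.  Equip `O(n) × K` with `σ • (τ, k) = (σ * τ, k)` and
`g • (τ, k) = (τ * (ρ g)⁻¹, g • k)`.  Then (i) these actions commute, and (ii) maps
`α : O(n) × K → X` that are both `O(n)`- and `G`-equivariant correspond bijectively to
maps `β : K → X` with `β (g • k) = ρ g • (g • β k)`, via `β k = α (1, k)` and
`α (τ, k) = τ • β k`. -/
theorem free_spectrum_adjunction {G K X : Type*} [Group G] (n : ℕ) [MulAction G K]
    [MulAction G X] [MulAction (Matrix.orthogonalGroup (Fin n) ℝ) X]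
    (hcomm : ∀ (σ : Matrix.orthogonalGroup (Fin n) ℝ) (g : G) (x : X),
      σ • (g • x) = g • (σ • x))
    (ρ : G →* Matrix.orthogonalGroup (Fin n) ℝ) :
    (∀ (σ : Matrix.orthogonalGroup (Fin n) ℝ) (g : G)
       (τ : Matrix.orthogonalGroup (Fin n) ℝ) (k : K),
       (σ * (τ * (ρ g)⁻¹), g • k) = ((σ * τ) * (ρ g)⁻¹, g • k)) ∧
    ∃ e : {α : Matrix.orthogonalGroup (Fin n) ℝ × K → X //
            (∀ (σ τ : Matrix.orthogonalGroup (Fin n) ℝ) (k : K),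
              α (σ * τ, k) = σ • α (τ, k)) ∧
            (∀ (g : G) (τ : Matrix.orthogonalGroup (Fin n) ℝ) (k : K),
              α (τ * (ρ g)⁻¹, g • k) = g • α (τ, k))} ≃
          {β : K → X // ∀ (g : G) (k : K), β (g • k) = ρ g • (g • β k)},
      (∀ α (k : K), (e α).1 k = α.1 (1, k)) ∧
      (∀ β (τ : Matrix.orthogonalGroup (Fin n) ℝ) (k : K),
        (e.symm β).1 (τ, k) = τ • β.1 k) := by
  refine ⟨fun σ g τ k => by rw [mul_assoc], ?_⟩
  refine ⟨{
    toFun := fun α => ⟨fun k => α.1 (1, k), fun g k => ?_⟩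
    invFun := fun β => ⟨fun p => p.1 • β.1 p.2, fun σ τ k => mul_smul σ τ _,
      fun g τ k => ?_⟩
    left_inv := fun α => ?_
    right_inv := fun β => ?_ }, fun α k => rfl, fun β τ k => rfl⟩
  · dsimp only
    have h := α.2.2 g (ρ g) k
    rw [mul_inv_cancel] at h
    have h2 := α.2.1 (ρ g) 1 k
    rw [mul_one] at h2
    rw [h, h2, ← hcomm]
  · dsimp only
    rw [β.2, mul_smul, inv_smul_smul, hcomm]
  · ext ⟨τ, k⟩
    have := α.2.1 τ 1 k
    rw [mul_one] at this
    exact this.symm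
  · ext k
    exact one_smul _ _
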